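/- Let R be a commutative ring in which the lattice of ideals is distributive (an arithmetical ring). Given ideals A₁, …, A_n and elements x₁, …, x_n ∈ R satisfying x_i − x_j ∈ A_i + A_j for all i ≠ j, there exists x ∈ R with x − x_i ∈ A_i for all i (Chinese Remainder Theorem for arithmetical rings). -/
import Mathlib

private lemma sup_distrib' {R : Type*} [CommRing R]
    (hdist : ∀ A B C : Ideal R, A ⊓ (B ⊔ C) = (A ⊓ B) ⊔ (A ⊓ C))
    (A B C : Ideal R) : (A ⊓ B) ⊔ C = (A ⊔ C) ⊓ (B ⊔ C) := by
  apply le_antisymm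
  · exact sup_le (le_inf (inf_le_left.trans le_sup_left) (inf_le_right.trans le_sup_left))
      (le_inf le_sup_right le_sup_right)
  · rw [hdist]
    apply sup_le
    · rw [inf_comm, hdist]
      exact sup_le (by rw [inf_comm]; exact le_sup_left) (inf_le_right.trans le_sup_right)
    · exact inf_le_right.trans le_sup_right

private lemma iInf_sup_eq' {R : Type*} [CommRing R]
    (hdist : ∀ A B C : Ideal R, A ⊓ (B ⊔ C) = (A ⊓ B) ⊔ (A ⊓ C)) :
    ∀ (n : ℕ) (A : Fin n → Ideal R) (B : Ideal R),
      (⨅ i, A i) ⊔ B = ⨅ i, (A i ⊔ B) := by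
  intro n
  induction n with
  | zero => intro A B; rw [iInf_of_empty, iInf_of_empty, top_sup_eq]
  | succ n ih =>
    intro A B
    have h1 : (⨅ i, A i) = (⨅ i : Fin n, A i.castSucc) ⊓ A (Fin.last n) := by
      apply le_antisymm
      · exact le_inf (le_iInf fun i => iInf_le _ _) (iInf_le _ _)
      · apply le_iInf
        intro i
        induction i using Fin.lastCases with
        | last => exact inf_le_right
        | cast j => exact inf_le_left.trans (iInf_le _ j)
    rw [h1, sup_distrib' hdist, ih]
    apply le_antisymm
    · apply le_iInf
      intro i
      induction i using Fin.lastCases with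
      | last => exact inf_le_right
      | cast j => exact inf_le_left.trans (iInf_le _ j)
    · exact le_inf (le_iInf fun j => iInf_le _ j.castSucc) (iInf_le _ (Fin.last n))

theorem crt_of_arithmetical {R : Type*} [CommRing R]
    (hdist : ∀ A B C : Ideal R, A ⊓ (B ⊔ C) = (A ⊓ B) ⊔ (A ⊓ C))
    (n : ℕ) (A : Fin n → Ideal R) (x : Fin n → R)
    (hcompat : ∀ i j, i ≠ j → x i - x j ∈ A i ⊔ A j) :
    ∃ y : R, ∀ i, y - x i ∈ A i := by
  induction n with
  | zero => exact ⟨0, fun i => i.elim0⟩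
  | succ n ih =>
    obtain ⟨y, hy⟩ := ih (fun i => A i.castSucc) (fun i => x i.castSucc)
      (fun i j hij => hcompat _ _ (by simpa using hij))
    have hmem : y - x (Fin.last n) ∈ (⨅ i : Fin n, A i.castSucc) ⊔ A (Fin.last n) := by
      rw [iInf_sup_eq' hdist]
      rw [Submodule.mem_iInf]
      intro i
      have h1 : y - x i.castSucc ∈ A i.castSucc ⊔ A (Fin.last n) :=
        Ideal.mem_sup_left (hy i)
      have h2 : x i.castSucc - x (Fin.last n) ∈ A i.castSucc ⊔ A (Fin.last n) :=
        hcompat _ _ (Fin.castSucc_lt_last i).ne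
      have := Submodule.add_mem _ h1 h2
      simpa using this
    rw [Submodule.mem_sup] at hmem
    obtain ⟨u, hu, v, hv, huv⟩ := hmem
    refine ⟨y - u, fun i => ?_⟩
    induction i using Fin.lastCases with
    | last =>
      have h : y - u - x (Fin.last n) = v := by linear_combination -huv
      rwa [h]
    | cast j =>
      have hu' : u ∈ A j.castSucc := (Submodule.mem_iInf _).mp hu j
      have h : y - u - x j.castSucc = (y - x j.castSucc) - u := by ring
      rw [h]
      exact Submodule.sub_mem _ (hy j) hu'
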